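/- arXiv:2208.04606 — 2 statements merged into one kernel-verified Lean document; each statement's English description precedes it below -/
import Mathlib

section
/- Extremum principle for the Caputo derivative: let 0 < α < 1, y ∈ C[0,T] with t^{1-α} y'(t) continuous on [0,T] (in particular y ∈ C¹(0,T]). If y attains its minimum over [0,T] at a point t₀ ∈ (0,T], then the Caputo derivative satisfies d_t^α y(t₀) ≤ 0. -/
open MeasureTheory

/-- Extremum principle for the Caputo fractional derivative: if `y` is continuous on `[0,T]`,
`t^{1-α} y'` extends continuously to `[0,T]`, and `y` attains its minimum over `[0,T]`
at `t₀ ∈ (0,T]`, then `d_t^α y (t₀) ≤ 0`. -/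
theorem caputo_extremum_principle (α T t₀ : ℝ) (hα0 : 0 < α) (hα1 : α < 1) (hT : 0 < T)
    (y : ℝ → ℝ) (hy : ContinuousOn y (Set.Icc 0 T))
    (hdiff : ∀ t ∈ Set.Ioc (0:ℝ) T, DifferentiableAt ℝ y t)
    (hcont : ContinuousOn (fun t => t ^ (1 - α) * deriv y t) (Set.Icc 0 T))
    (ht₀ : t₀ ∈ Set.Ioc (0:ℝ) T)
    (hmin : ∀ t ∈ Set.Icc (0:ℝ) T, y t₀ ≤ y t) :
    (1 / Real.Gamma (1 - α)) * ∫ s in (0:ℝ)..t₀, (t₀ - s) ^ (-α) * deriv y s ≤ 0 := by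
  obtain ⟨ht₀0, ht₀T⟩ := ht₀
  set f : ℝ → ℝ := fun s => (t₀ - s) ^ (-α) * deriv y s with hf
  have hΓ : 0 ≤ 1 / Real.Gamma (1 - α) := by
    have := Real.Gamma_pos_of_pos (by linarith : (0:ℝ) < 1 - α)
    positivity
  refine mul_nonpos_of_nonneg_of_nonpos hΓ ?_
  -- continuity of deriv y on (0, T]
  have hderivcont : ContinuousOn (deriv y) (Set.Ioc 0 T) := by
    have h1 : ContinuousOn (fun t : ℝ => t ^ (α - 1) * (t ^ (1 - α) * deriv y t))
        (Set.Ioc 0 T) := by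
      refine ContinuousOn.mul ?_ (hcont.mono Set.Ioc_subset_Icc_self)
      exact continuousOn_id.rpow_const fun x hx => Or.inl (ne_of_gt hx.1)
    refine h1.congr fun t ht => ?_
    show deriv y t = t ^ (α - 1) * (t ^ (1 - α) * deriv y t)
    rw [← mul_assoc, ← Real.rpow_add ht.1]
    norm_num
  by_cases hint : IntervalIntegrable f volume 0 t₀
  · -- main case
    set F : ℝ → ℝ := fun x => ∫ s in (0:ℝ)..x, f s with hF
    have hFc : ContinuousOn F (Set.uIcc 0 t₀) :=
      intervalIntegral.continuousOn_primitive_interval' hint Set.left_mem_uIcc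
    have huIcc : Set.uIcc (0:ℝ) t₀ = Set.Icc 0 t₀ := Set.uIcc_of_le ht₀0.le
    -- nonnegativity of y - y t₀ on [0, T]
    have hg : ∀ t ∈ Set.Icc (0:ℝ) T, 0 ≤ y t - y t₀ := fun t ht => by
      linarith [hmin t ht]
    -- integration by parts bound
    have ibp : ∀ a b : ℝ, 0 < a → a ≤ b → b < t₀ →
        (∫ s in a..b, f s) ≤ (t₀ - b) ^ (-α) * (y b - y t₀) := by
      intro a b ha hab hb
      have hsub : Set.uIcc a b ⊆ Set.Icc a b := by rw [Set.uIcc_of_le hab]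
      have hmem : ∀ x ∈ Set.uIcc a b, 0 < x ∧ x < t₀ := fun x hx => by
        have := hsub hx
        exact ⟨lt_of_lt_of_le ha this.1, lt_of_le_of_lt this.2 hb⟩
      have hmemT : ∀ x ∈ Set.uIcc a b, x ∈ Set.Ioc (0:ℝ) T := fun x hx =>
        ⟨(hmem x hx).1, le_trans (hmem x hx).2.le ht₀T⟩
      have hu : ∀ x ∈ Set.uIcc a b,
          HasDerivAt (fun s => (t₀ - s) ^ (-α)) (α * (t₀ - x) ^ (-α - 1)) x := by
        intro x hx
        have hx' : 0 < t₀ - x := by linarith [(hmem x hx).2]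
        have h1 : HasDerivAt (fun s : ℝ => t₀ - s) (-1) x := (hasDerivAt_id x).const_sub t₀
        have h2 := (Real.hasDerivAt_rpow_const (x := t₀ - x) (p := -α)
          (Or.inl hx'.ne')).comp x h1
        refine h2.congr_deriv ?_
        ring
      have hv : ∀ x ∈ Set.uIcc a b, HasDerivAt (fun s => y s - y t₀) (deriv y x) x :=
        fun x hx => ((hdiff x (hmemT x hx)).hasDerivAt).sub_const _
      have hu'int : IntervalIntegrable (fun x => α * (t₀ - x) ^ (-α - 1)) volume a b := by
        apply ContinuousOn.intervalIntegrable
        refine continuousOn_const.mul ?_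
        refine ContinuousOn.rpow_const (continuousOn_const.sub continuousOn_id) ?_
        intro x hx
        have : 0 < t₀ - x := by linarith [(hmem x hx).2]
        exact Or.inl this.ne'
      have hv'int : IntervalIntegrable (deriv y) volume a b :=
        (hderivcont.mono hmemT).intervalIntegrable
      have heq := intervalIntegral.integral_mul_deriv_eq_deriv_mul hu hv hu'int hv'int
      have hfa : (∫ s in a..b, f s) =
          ∫ x in a..b, (t₀ - x) ^ (-α) * deriv y x := rfl
      rw [hfa, heq]
      have hterm1 : 0 ≤ (t₀ - a) ^ (-α) * (y a - y t₀) := by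
        refine mul_nonneg (Real.rpow_nonneg (by linarith [(hmem a Set.left_mem_uIcc).2]) _) ?_
        exact hg a ⟨ha.le, by linarith [(hmem a Set.left_mem_uIcc).2]⟩
      have hterm2 : 0 ≤ ∫ x in a..b, α * (t₀ - x) ^ (-α - 1) * (y x - y t₀) := by
        refine intervalIntegral.integral_nonneg hab fun x hx => ?_
        have hx' : x ∈ Set.uIcc a b := by
          rw [Set.uIcc_of_le hab]; exact hx
        refine mul_nonneg (mul_nonneg hα0.le (Real.rpow_nonneg (by
          linarith [(hmem x hx').2]) _)) ?_
        exact hg x ⟨(hmem x hx').1.le, by linarith [(hmem x hx').2]⟩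
      linarith
    -- bound on F b for b ∈ (0, t₀)
    have step2 : ∀ b ∈ Set.Ioo (0:ℝ) t₀, F b ≤ (t₀ - b) ^ (-α) * (y b - y t₀) := by
      intro b hb
      have hbound : ∀ a ∈ Set.Ioo (0:ℝ) b, F b - F a ≤ (t₀ - b) ^ (-α) * (y b - y t₀) := by
        intro a ha
        have hint0b : IntervalIntegrable f volume 0 b :=
          hint.mono_set (by
            rw [Set.uIcc_of_le hb.1.le, Set.uIcc_of_le ht₀0.le]
            exact Set.Icc_subset_Icc le_rfl hb.2.le)
        have hint0a : IntervalIntegrable f volume 0 a :=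
          hint.mono_set (by
            rw [Set.uIcc_of_le ha.1.le, Set.uIcc_of_le ht₀0.le]
            exact Set.Icc_subset_Icc le_rfl (by linarith [ha.2, hb.2]))
        have : F b - F a = ∫ s in a..b, f s :=
          intervalIntegral.integral_interval_sub_left hint0b hint0a
        rw [this]
        exact ibp a b ha.1 ha.2.le hb.2
      have hten : Filter.Tendsto (fun a => F b - F a) (nhdsWithin 0 (Set.Ioi 0))
          (nhds (F b)) := by
        have hF0 : F 0 = 0 := intervalIntegral.integral_same
        have hcw : Filter.Tendsto F (nhdsWithin 0 (Set.Ioi 0)) (nhds (F 0)) := by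
          have h1 : ContinuousWithinAt F (Set.uIcc 0 t₀) 0 :=
            hFc 0 Set.left_mem_uIcc
          have h2 : nhdsWithin (0:ℝ) (Set.Ioo 0 t₀) = nhdsWithin 0 (Set.Ioi 0) :=
            nhdsWithin_Ioo_eq_nhdsGT ht₀0
          refine Filter.Tendsto.mono_left h1 ?_
          rw [← h2]
          exact nhdsWithin_mono 0 (by rw [huIcc]; exact Set.Ioo_subset_Icc_self)
        have := (tendsto_const_nhds (x := F b)).sub hcw
        rwa [hF0, sub_zero] at this
      refine le_of_tendsto hten ?_
      filter_upwards [Ioo_mem_nhdsGT_of_mem (Set.left_mem_Ico.mpr hb.1)] with a ha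
      exact hbound a ha
    -- bound near t₀ via derivative bound
    obtain ⟨C, hC⟩ := (isCompact_Icc (a := t₀ / 2) (b := t₀)).exists_bound_of_continuousOn
      (hderivcont.mono (fun x hx => ⟨by linarith [hx.1], le_trans hx.2 ht₀T⟩))
    set M : ℝ := max C 0 with hM
    have hMnn : 0 ≤ M := le_max_right _ _
    have hCM : ∀ x ∈ Set.Icc (t₀ / 2) t₀, |deriv y x| ≤ M := fun x hx =>
      le_trans (hC x hx) (le_max_left _ _)
    have ybound : ∀ b ∈ Set.Ico (t₀ / 2) t₀, y b - y t₀ ≤ M * (t₀ - b) := by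
      intro b hb
      have hbsub : Set.uIcc b t₀ ⊆ Set.Icc (t₀ / 2) t₀ := by
        rw [Set.uIcc_of_le hb.2.le]
        exact Set.Icc_subset_Icc hb.1 le_rfl
      have hdiff' : ∀ x ∈ Set.uIcc b t₀, DifferentiableAt ℝ y x := fun x hx => by
        have := hbsub hx
        exact hdiff x ⟨by linarith [this.1], le_trans this.2 ht₀T⟩
      have hintd : IntervalIntegrable (deriv y) volume b t₀ := by
        refine (hderivcont.mono fun x hx => ?_).intervalIntegrable
        have := hbsub hx
        exact ⟨by linarith [this.1], le_trans this.2 ht₀T⟩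
      have hftc : (∫ x in b..t₀, deriv y x) = y t₀ - y b :=
        intervalIntegral.integral_deriv_eq_sub hdiff' hintd
      have hnorm : ‖∫ x in b..t₀, deriv y x‖ ≤ M * |t₀ - b| := by
        refine intervalIntegral.norm_integral_le_of_norm_le_const fun x hx => ?_
        have hx' : x ∈ Set.uIcc b t₀ := Set.uIoc_subset_uIcc hx
        exact hCM x (hbsub hx')
      rw [hftc] at hnorm
      have habs : |t₀ - b| = t₀ - b := abs_of_nonneg (by linarith [hb.2])
      rw [habs] at hnorm
      have := neg_abs_le (y t₀ - y b)
      have h2 : |y t₀ - y b| ≤ M * (t₀ - b) := by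
        simpa [Real.norm_eq_abs] using hnorm
      calc y b - y t₀ = -(y t₀ - y b) := by ring
        _ ≤ |y t₀ - y b| := by
            rw [← abs_neg]; exact le_abs_self _
        _ ≤ M * (t₀ - b) := h2
    -- final limit argument
    have htendF : Filter.Tendsto F (nhdsWithin t₀ (Set.Iio t₀)) (nhds (F t₀)) := by
      have h1 : ContinuousWithinAt F (Set.uIcc 0 t₀) t₀ := hFc t₀ Set.right_mem_uIcc
      have h2 : nhdsWithin t₀ (Set.Ioo 0 t₀) = nhdsWithin t₀ (Set.Iio t₀) :=
        nhdsWithin_Ioo_eq_nhdsLT ht₀0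
      refine Filter.Tendsto.mono_left h1 ?_
      rw [← h2]
      exact nhdsWithin_mono t₀ (by rw [huIcc]; exact Set.Ioo_subset_Icc_self)
    have htendB : Filter.Tendsto (fun b => M * (t₀ - b) ^ (1 - α))
        (nhdsWithin t₀ (Set.Iio t₀)) (nhds 0) := by
      have h1 : Filter.Tendsto (fun b : ℝ => t₀ - b) (nhdsWithin t₀ (Set.Iio t₀))
          (nhds 0) := by
        have : Filter.Tendsto (fun b : ℝ => t₀ - b) (nhds t₀) (nhds (t₀ - t₀)) :=
          (tendsto_const_nhds.sub Filter.tendsto_id)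
        rw [sub_self] at this
        exact this.mono_left nhdsWithin_le_nhds
      have h2 : ContinuousAt (fun x : ℝ => x ^ (1 - α)) 0 :=
        Real.continuousAt_rpow_const 0 (1 - α) (Or.inr (by linarith))
      have h3 := (h2.tendsto.comp h1)
      rw [Real.zero_rpow (by linarith : (1:ℝ) - α ≠ 0)] at h3
      have := h3.const_mul M
      simpa using this
    have hev : ∀ᶠ b in nhdsWithin t₀ (Set.Iio t₀), F b ≤ M * (t₀ - b) ^ (1 - α) := by
      filter_upwards [Ioo_mem_nhdsLT_of_mem (⟨by linarith, le_rfl⟩ : t₀ ∈ Set.Ioc (t₀ / 2) t₀)]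
        with b hb
      have hb' : b ∈ Set.Ioo (0:ℝ) t₀ := ⟨by linarith [hb.1], hb.2⟩
      have h1 := step2 b hb'
      have h2 := ybound b ⟨hb.1.le, hb.2⟩
      have hpos : 0 < t₀ - b := by linarith [hb.2]
      calc F b ≤ (t₀ - b) ^ (-α) * (y b - y t₀) := h1
        _ ≤ (t₀ - b) ^ (-α) * (M * (t₀ - b)) := by
            exact mul_le_mul_of_nonneg_left h2 (Real.rpow_nonneg hpos.le _)
        _ = M * (t₀ - b) ^ (1 - α) := by
            rw [show (1:ℝ) - α = -α + 1 by ring, Real.rpow_add hpos, Real.rpow_one]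
            ring
    exact le_of_tendsto_of_tendsto htendF htendB hev
  · rw [intervalIntegral.integral_undef hint]
end

section
/- Kernel integration identity for the Mittag-Leffler function: for α ∈ (0,1), λ > 0 and 0 ≤ ξ < t, (1/Γ(α)) ∫_ξ^t (t-s)^{α-1} (s-ξ)^{α-1} E_{α,α}(-λ (s-ξ)^α) ds = -(1/λ) (t-ξ)^{α-1} ( E_{α,α}(-λ (t-ξ)^α) - 1/Γ(α) ). -/
open MeasureTheory

open Real Set Filter

lemma gamma_ratio (a y : ℝ) (ha0 : 0 < a) (ha1 : a < 1) (hy : 1 < y + a) :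
    Real.Gamma y ≤ Real.Gamma (y + a) / (y + a - 1) ^ a := by
  have hs : 0 < y + a - 1 := by linarith
  have hy0 : 0 < y := by nlinarith
  have hG : Real.Gamma y ≤ Real.Gamma (y + a - 1) ^ a * Real.Gamma (y + a) ^ (1 - a) := by
    have := Real.Gamma_mul_add_mul_le_rpow_Gamma_mul_rpow_Gamma (s := y + a - 1) (t := y + a)
      (a := a) (b := 1 - a) hs (by linarith) ha0 (by linarith) (by ring)
    convert this using 2
    ring
  have hrec : Real.Gamma (y + a - 1) = Real.Gamma (y + a) / (y + a - 1) := by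
    have h := Real.Gamma_add_one hs.ne'
    rw [show y + a - 1 + 1 = y + a by ring] at h
    rw [h, mul_div_cancel_left₀ _ hs.ne']
  have hGpos : 0 < Real.Gamma (y + a) := Real.Gamma_pos_of_pos (by linarith)
  calc Real.Gamma y ≤ Real.Gamma (y + a - 1) ^ a * Real.Gamma (y + a) ^ (1 - a) := hG
    _ = Real.Gamma (y + a) / (y + a - 1) ^ a := by
        rw [hrec, Real.div_rpow hGpos.le hs.le, div_mul_eq_mul_div,
          ← Real.rpow_add hGpos]
        norm_num

lemma ml_summable {a b : ℝ} (ha0 : 0 < a) (ha1 : a < 1) (hb : 0 < b) (x : ℝ) :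
    Summable (fun k : ℕ => x ^ k / Real.Gamma (a * k + b)) := by
  apply summable_of_ratio_norm_eventually_le (r := 1/2) (by norm_num)
  have base : Tendsto (fun k : ℕ => a * k + (b + a - 1)) atTop atTop :=
    tendsto_atTop_add_const_right _ _ ((tendsto_natCast_atTop_atTop (R := ℝ)).const_mul_atTop ha0)
  have base' : Tendsto (fun k : ℕ => a * k + b + a - 1) atTop atTop :=
    base.congr (fun k => by ring)
  have htend : Tendsto (fun k : ℕ => (a * k + b + a - 1) ^ a) atTop atTop :=
    (tendsto_rpow_atTop ha0).comp base'
  have h1 : ∀ᶠ k : ℕ in atTop, 2 * |x| ≤ (a * k + b + a - 1) ^ a :=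
    htend.eventually_ge_atTop _
  have h2 : ∀ᶠ k : ℕ in atTop, 1 < a * k + b + a - 1 := base'.eventually_gt_atTop _
  filter_upwards [h1, h2] with k hk1 hk2
  have hy0 : 0 < a * k + b := by positivity
  have hG1 : 0 < Real.Gamma (a * k + b) := Real.Gamma_pos_of_pos hy0
  have hG2 : 0 < Real.Gamma (a * k + b + a) := Real.Gamma_pos_of_pos (by linarith)
  have hpow : 0 < (a * k + b + a - 1) ^ a := Real.rpow_pos_of_pos (by linarith) _
  have hratio := gamma_ratio a (a * k + b) ha0 ha1 (by linarith)
  have hden : Real.Gamma (a * k + b) * (a * k + b + a - 1) ^ a ≤ Real.Gamma (a * k + b + a) :=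
    (le_div_iff₀ hpow).mp hratio
  have key : |x| / (a * k + b + a - 1) ^ a ≤ 1 / 2 := by
    rw [div_le_iff₀ hpow]; linarith
  rw [show a * (k + 1 : ℕ) + b = a * k + b + a by push_cast; ring]
  rw [Real.norm_eq_abs, Real.norm_eq_abs, abs_div, abs_div, abs_of_pos hG1, abs_of_pos hG2,
    abs_pow, abs_pow, pow_succ]
  calc |x| ^ k * |x| / Real.Gamma (a * k + b + a)
      ≤ |x| ^ k * |x| / (Real.Gamma (a * k + b) * (a * k + b + a - 1) ^ a) := by
        gcongr <;> positivity
    _ = |x| ^ k / Real.Gamma (a * k + b) * (|x| / (a * k + b + a - 1) ^ a) :=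
        (div_mul_div_comm _ _ _ _).symm
    _ ≤ |x| ^ k / Real.Gamma (a * k + b) * (1 / 2) := by
        exact mul_le_mul_of_nonneg_left key (by positivity)
    _ = 1 / 2 * (|x| ^ k / Real.Gamma (a * k + b)) := by ring


lemma beta_real {a b c : ℝ} (ha : 0 < a) (hb : 0 < b) (hc : 0 < c) :
    ∫ s in (0:ℝ)..c, s ^ (b - 1) * (c - s) ^ (a - 1)
      = c ^ (a + b - 1) * (Real.Gamma a * Real.Gamma b / Real.Gamma (a + b)) := by
  have hG : (0:ℝ) < Real.Gamma (a + b) := Real.Gamma_pos_of_pos (by linarith)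
  -- complex beta value
  have hbeta : Complex.betaIntegral b a
      = (Real.Gamma a * Real.Gamma b / Real.Gamma (a + b) : ℝ) := by
    have h := Complex.Gamma_mul_Gamma_eq_betaIntegral (s := (b:ℂ)) (t := (a:ℂ))
      (by simpa using hb) (by simpa using ha)
    rw [Complex.Gamma_ofReal, Complex.Gamma_ofReal] at h
    have h2 : ((b:ℂ) + a) = ((a + b : ℝ) : ℂ) := by push_cast; ring
    rw [h2, Complex.Gamma_ofReal] at h
    have hGne : ((Real.Gamma (a+b) : ℂ)) ≠ 0 := by
      simpa using hG.ne'
    field_simp at h ⊢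
    push_cast; rw [eq_div_iff hGne]; linear_combination -h
  have hscaled := Complex.betaIntegral_scaled (b:ℂ) (a:ℂ) hc
  -- identify the complex integral with the real one
  have hid : (∫ x in (0:ℝ)..c, (x:ℂ) ^ ((b:ℂ) - 1) * ((c:ℂ) - x) ^ ((a:ℂ) - 1))
      = ((∫ s in (0:ℝ)..c, s ^ (b - 1) * (c - s) ^ (a - 1) : ℝ) : ℂ) := by
    rw [← intervalIntegral.integral_ofReal]
    rw [intervalIntegral.integral_of_le hc.le, intervalIntegral.integral_of_le hc.le]
    refine setIntegral_congr_fun measurableSet_Ioc fun x hx => ?_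
    have hx0 : (0:ℝ) ≤ x := hx.1.le
    have hcx : (0:ℝ) ≤ c - x := by linarith [hx.2]
    push_cast
    rw [Complex.ofReal_cpow hx0, Complex.ofReal_cpow hcx]
    push_cast
    ring
  have hcpow : ((c:ℂ)) ^ ((b:ℂ) + a - 1) = ((c ^ (a + b - 1) : ℝ) : ℂ) := by
    rw [Complex.ofReal_cpow hc.le]
    push_cast
    ring_nf
  rw [hid, hcpow, hbeta] at hscaled
  have := hscaled
  rw [← Complex.ofReal_mul] at this
  exact_mod_cast this

lemma kernel_intervalIntegrable {a b c : ℝ} (ha : 0 < a) (hb : 0 < b) (hc : 0 < c) :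
    IntervalIntegrable (fun s : ℝ => s ^ (b - 1) * (c - s) ^ (a - 1)) volume 0 c := by
  have h1 : IntervalIntegrable (fun s : ℝ => s ^ (b - 1) * (c - s) ^ (a - 1)) volume 0 (c/2) := by
    apply IntervalIntegrable.mul_continuousOn
    · exact intervalIntegral.intervalIntegrable_rpow' (by linarith)
    · apply ContinuousOn.rpow_const
      · exact (continuous_const.sub continuous_id).continuousOn
      · intro x hx
        left
        rw [uIcc_of_le (by linarith)] at hx
        have := hx.2
        intro h
        have : x = c := by linarith [sub_eq_zero.mp h]
        linarith [hx.2, hc]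
  have h2 : IntervalIntegrable (fun s : ℝ => s ^ (b - 1) * (c - s) ^ (a - 1)) volume (c/2) c := by
    apply IntervalIntegrable.continuousOn_mul (g := fun s : ℝ => s ^ (b - 1))
    · have hbase : IntervalIntegrable (fun s : ℝ => s ^ (a - 1)) volume 0 (c/2) :=
        intervalIntegral.intervalIntegrable_rpow' (by linarith)
      have := hbase.comp_sub_left c
      simpa [sub_half] using this.symm
    · apply ContinuousOn.rpow_const continuous_id.continuousOn
      intro x hx
      left
      rw [uIcc_of_le (by linarith)] at hx
      simp only [id_eq]
      nlinarith [hx.1]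
  exact h1.trans h2

lemma shifted_beta {a b ξ t : ℝ} (ha : 0 < a) (hb : 0 < b) (h : ξ < t) :
    ∫ s in ξ..t, (s - ξ) ^ (b - 1) * (t - s) ^ (a - 1)
      = (t - ξ) ^ (a + b - 1) * (Real.Gamma a * Real.Gamma b / Real.Gamma (a + b)) := by
  have hc : 0 < t - ξ := by linarith
  have key := intervalIntegral.integral_comp_sub_right (a := ξ) (b := t)
    (fun u : ℝ => u ^ (b - 1) * ((t - ξ) - u) ^ (a - 1)) ξ
  simp only [sub_sub_sub_cancel_right, sub_self] at key
  rw [key]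
  exact beta_real ha hb hc

lemma shifted_integrable {a b ξ t : ℝ} (ha : 0 < a) (hb : 0 < b) (h : ξ < t) :
    IntervalIntegrable (fun s : ℝ => (s - ξ) ^ (b - 1) * (t - s) ^ (a - 1)) volume ξ t := by
  have hc : 0 < t - ξ := by linarith
  have h0 := (kernel_intervalIntegrable ha hb hc).comp_sub_right ξ
  rw [zero_add, sub_add_cancel] at h0
  simpa [sub_sub_sub_cancel_right] using h0


/-- The Mittag-Leffler function `E_{α,β}(z) = Σ_{k≥0} z^k / Γ(αk+β)`. -/
noncomputable def mittagLeffler (α β z : ℝ) : ℝ :=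
  ∑' k : ℕ, z ^ k / Real.Gamma (α * k + β)

/-- Kernel integration identity for the Mittag-Leffler function: for `α ∈ (0,1)`, `λ > 0`,
`0 ≤ ξ < t`:
`(1/Γ(α)) ∫_ξ^t (t-s)^{α-1} (s-ξ)^{α-1} E_{α,α}(-λ(s-ξ)^α) ds
  = -(1/λ)(t-ξ)^{α-1}(E_{α,α}(-λ(t-ξ)^α) - 1/Γ(α))`. -/
theorem mittagLeffler_kernel_identity (α lam ξ t : ℝ) (hα0 : 0 < α) (hα1 : α < 1)
    (hlam : 0 < lam) (hξ : 0 ≤ ξ) (hξt : ξ < t) :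
    (1 / Real.Gamma α) *
        ∫ s in ξ..t, (t - s) ^ (α - 1) * (s - ξ) ^ (α - 1)
          * mittagLeffler α α (-lam * (s - ξ) ^ α)
      = -(1 / lam) * (t - ξ) ^ (α - 1)
          * (mittagLeffler α α (-lam * (t - ξ) ^ α) - 1 / Real.Gamma α) := by
  set c : ℝ := t - ξ with hcdef
  have hc : 0 < c := by simp only [hcdef]; linarith
  set z : ℝ := -lam * c ^ α with hzdef
  have hΓα : 0 < Real.Gamma α := Real.Gamma_pos_of_pos hα0
  set F : ℕ → ℝ → ℝ := fun k s =>
    ((-lam) ^ k / Real.Gamma (α * k + α)) * ((s - ξ) ^ (α * k + α - 1) * (t - s) ^ (α - 1))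
    with hFdef
  have hΓ1 : ∀ k : ℕ, (0:ℝ) < Real.Gamma (α * k + α) :=
    fun k => Real.Gamma_pos_of_pos (by positivity)
  have hΓ2 : ∀ k : ℕ, (0:ℝ) < Real.Gamma (α * k + 2 * α) :=
    fun k => Real.Gamma_pos_of_pos (by positivity)
  -- exponent splitting
  have epow : ∀ k : ℕ, c ^ (α * k + 2 * α - 1) = (c ^ α) ^ k * c ^ (2 * α - 1) := by
    intro k
    rw [show α * (k:ℝ) + 2 * α - 1 = α * (k:ℝ) + (2 * α - 1) by ring, Real.rpow_add hc,
      Real.rpow_mul hc.le, Real.rpow_natCast]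
  -- pointwise identity on Ioc
  have hpt : EqOn (fun s => (t - s) ^ (α - 1) * (s - ξ) ^ (α - 1)
      * mittagLeffler α α (-lam * (s - ξ) ^ α)) (fun s => ∑' k : ℕ, F k s) (Ioc ξ t) := by
    intro s hs
    have hsξ : 0 < s - ξ := by simp only [sub_pos]; exact hs.1
    simp only [mittagLeffler, hFdef]
    rw [← tsum_mul_left]
    refine tsum_congr fun k => ?_
    have e1 : (-lam * (s - ξ) ^ α) ^ k = (-lam) ^ k * (s - ξ) ^ (α * (k:ℝ)) := by
      rw [mul_pow, Real.rpow_mul hsξ.le, Real.rpow_natCast]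
    have e2 : (s - ξ) ^ (α * (k:ℝ) + α - 1) = (s - ξ) ^ (α * (k:ℝ)) * (s - ξ) ^ (α - 1) := by
      rw [← Real.rpow_add hsξ]; ring_nf
    rw [e1, e2]
    ring
  -- integrability
  have hFint : ∀ k : ℕ, Integrable (F k) (volume.restrict (Ioc ξ t)) := by
    intro k
    have h0 : IntervalIntegrable (fun s : ℝ => (s - ξ) ^ (α * k + α - 1) * (t - s) ^ (α - 1))
        volume ξ t := shifted_integrable hα0 (by positivity) hξt
    have h1 := h0.const_mul ((-lam) ^ k / Real.Gamma (α * k + α))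
    exact (intervalIntegrable_iff_integrableOn_Ioc_of_le hξt.le).mp h1
  -- value of each integral
  have hval : ∀ k : ℕ, (∫ s in Ioc ξ t, F k s)
      = ((-lam) ^ k / Real.Gamma (α * k + α))
        * (c ^ (α * k + 2 * α - 1)
          * (Real.Gamma α * Real.Gamma (α * k + α) / Real.Gamma (α * k + 2 * α))) := by
    intro k
    rw [← intervalIntegral.integral_of_le hξt.le]
    simp only [hFdef]
    rw [intervalIntegral.integral_const_mul, shifted_beta hα0 (by positivity) hξt,
      show α + (α * (k:ℝ) + α) = α * k + 2 * α by ring]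
  -- norm integrals
  have hnorm : ∀ k : ℕ, (∫ s in Ioc ξ t, ‖F k s‖)
      = (lam ^ k / Real.Gamma (α * k + α))
        * (c ^ (α * k + 2 * α - 1)
          * (Real.Gamma α * Real.Gamma (α * k + α) / Real.Gamma (α * k + 2 * α))) := by
    intro k
    have heq : EqOn (fun s => ‖F k s‖)
        (fun s => (lam ^ k / Real.Gamma (α * k + α))
          * ((s - ξ) ^ (α * k + α - 1) * (t - s) ^ (α - 1))) (Ioc ξ t) := by
      intro s hs
      have h1 : (0:ℝ) ≤ s - ξ := by linarith [hs.1]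
      have h2 : (0:ℝ) ≤ t - s := by linarith [hs.2]
      simp only [hFdef, Real.norm_eq_abs, abs_mul, abs_div, abs_pow, abs_neg,
        abs_of_pos hlam, abs_of_pos (hΓ1 k),
        abs_of_nonneg (Real.rpow_nonneg h1 _), abs_of_nonneg (Real.rpow_nonneg h2 _)]
    rw [setIntegral_congr_fun measurableSet_Ioc heq, ← intervalIntegral.integral_of_le hξt.le,
      intervalIntegral.integral_const_mul, shifted_beta hα0 (by positivity) hξt,
      show α + (α * (k:ℝ) + α) = α * k + 2 * α by ring]
  -- summability of norm integrals
  have hFsum : Summable (fun k : ℕ => ∫ s in Ioc ξ t, ‖F k s‖) := by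
    apply Summable.congr
      (((ml_summable (b := 2*α) hα0 hα1 (by positivity) (lam * c ^ α)).mul_left
        (Real.Gamma α * c ^ (2 * α - 1))))
    intro k
    have h1 := (hΓ1 k).ne'
    have h2 := (hΓ2 k).ne'
    rw [hnorm k, epow k, mul_pow]
    field_simp
  -- swap integral and sum
  have hswap : (∫ s in Ioc ξ t, ∑' k : ℕ, F k s) = ∑' k : ℕ, ∫ s in Ioc ξ t, F k s :=
    (MeasureTheory.integral_tsum_of_summable_integral_norm hFint hFsum).symm
  -- LHS computation
  have hS : Summable (fun k : ℕ => z ^ k / Real.Gamma (α * k + 2 * α)) :=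
    ml_summable (b := 2*α) hα0 hα1 (by positivity) z
  set S : ℝ := ∑' k : ℕ, z ^ k / Real.Gamma (α * k + 2 * α) with hSdef
  have hLHS : (1 / Real.Gamma α) *
      (∫ s in ξ..t, (t - s) ^ (α - 1) * (s - ξ) ^ (α - 1)
        * mittagLeffler α α (-lam * (s - ξ) ^ α)) = c ^ (2 * α - 1) * S := by
    rw [intervalIntegral.integral_of_le hξt.le, setIntegral_congr_fun measurableSet_Ioc hpt,
      hswap]
    have hterm : ∀ k : ℕ, (∫ s in Ioc ξ t, F k s)
        = Real.Gamma α * (c ^ (2 * α - 1) * (z ^ k / Real.Gamma (α * k + 2 * α))) := by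
      intro k
      have h1 := (hΓ1 k).ne'
      have h2 := (hΓ2 k).ne'
      rw [hval k, epow k, hzdef, mul_pow]
      field_simp
    simp only [hterm]
    rw [tsum_mul_left, tsum_mul_left, ← hSdef]
    field_simp
  rw [hLHS]
  -- RHS computation
  have hsum1 : Summable (fun k : ℕ => z ^ k / Real.Gamma (α * k + α)) :=
    ml_summable hα0 hα1 hα0 z
  have hML : mittagLeffler α α z - 1 / Real.Gamma α = z * S := by
    rw [mittagLeffler, hsum1.tsum_eq_zero_add]
    have h0 : z ^ (0:ℕ) / Real.Gamma (α * (0:ℕ) + α) = 1 / Real.Gamma α := by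
      norm_num
    have hterm : ∀ k : ℕ, z ^ (k + 1) / Real.Gamma (α * ((k:ℝ) + 1) + α)
        = z * (z ^ k / Real.Gamma (α * k + 2 * α)) := by
      intro k
      rw [pow_succ, show α * ((k:ℝ) + 1) + α = α * k + 2 * α by ring]
      ring
    rw [h0]
    simp only [Nat.cast_add, Nat.cast_one, hterm]
    rw [tsum_mul_left, ← hSdef]
    ring
  have hcc : c ^ (α - 1) * c ^ α = c ^ (2 * α - 1) := by
    rw [← Real.rpow_add hc]; ring_nf
  rw [hML, ← hcc, hzdef]
  field_simp
end
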